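/- Let x₀ ∈ ℝ^n with x₀ ≠ 0, let V ∈ ℝ^{n×ξ} be a matrix whose first column is x₀/‖x₀‖ (i.e., V e₁ = x₀/‖x₀‖), let H ∈ ℝ^{ξ×ξ}, δ > 0, and let η ≥ 2 be an integer with ‖H‖_∞ δ/(η+2) < 1 and Φ = (‖H‖_∞ δ)^{η+1}/((η+1)!) · 1/(1 − ‖H‖_∞ δ/(η+2)). Define x̂(t) = ‖x₀‖ V exp(H t) e₁. Then for every t ∈ [0, δ] there exist real numbers τ_i ∈ [(i^{−i/(i−1)} − i^{−1/(i−1)}) δ^i, 0] for i = 2, …, η and a matrix E ∈ ℝ^{ξ×ξ} with |E_{jk}| ≤ Φ for all j, k, such that x̂(t) = x₀ + (t/δ)(x̂(δ) − x₀) + ‖x₀‖ V (Σ_{i=2}^η τ_i H^i/i! + E) e₁. -/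

import Mathlib

open Matrix Set

/-- Matrix exponential of a real square matrix. -/
noncomputable def mexp {m : ℕ} (A : Matrix (Fin m) (Fin m) ℝ) : Matrix (Fin m) (Fin m) ℝ :=
  NormedSpace.exp A

/-- Euclidean norm of a vector in `ℝ^m`. -/
noncomputable def euclNorm {m : ℕ} (x : Fin m → ℝ) : ℝ :=
  ‖(WithLp.toLp 2 x : EuclideanSpace ℝ (Fin m))‖

/-- First standard basis vector of `ℝ^ξ`. -/
noncomputable def e1 {ξ : ℕ} [NeZero ξ] : Fin ξ → ℝ := Pi.single 0 1

/-- Maximum absolute row sum norm (`‖·‖_∞`) of a matrix. -/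
noncomputable def rowSumNorm {m : ℕ} (H : Matrix (Fin m) (Fin m) ℝ) : ℝ :=
  ⨆ i, ∑ j, |H i j|

/-- Lower endpoint `(i^{−i/(i−1)} − i^{−1/(i−1)}) δ^i` of the correction interval. -/
noncomputable def tauLo (i : ℕ) (δ : ℝ) : ℝ :=
  ((i : ℝ) ^ (-(i : ℝ) / ((i : ℝ) - 1)) - (i : ℝ) ^ (-(1 : ℝ) / ((i : ℝ) - 1))) * δ ^ i

attribute [local instance] Matrix.linftyOpSemiNormedRing Matrix.linftyOpNormedRing
  Matrix.linftyOpNormedAlgebra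

lemma fact_mul_pow_le (m n : ℕ) : (m+1).factorial * (m+2)^n ≤ (n + (m+1)).factorial := by
  induction n with
  | zero => simp
  | succ k ih =>
    calc (m+1).factorial * (m+2)^(k+1) = ((m+1).factorial * (m+2)^k) * (m+2) := by ring
    _ ≤ (k + (m+1)).factorial * (m+2) := Nat.mul_le_mul_right _ ih
    _ ≤ (k + (m+1)).factorial * (k + (m+1) + 1) := Nat.mul_le_mul_left _ (by omega)
    _ = (k + 1 + (m+1)).factorial := by
        rw [show k + 1 + (m+1) = (k + (m+1)) + 1 by omega, Nat.factorial_succ]; ring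

lemma entry_le_norm {m : ℕ} (A : Matrix (Fin m) (Fin m) ℝ) (j k : Fin m) : |A j k| ≤ ‖A‖ := by
  rw [Matrix.linfty_opNorm_def]
  calc |A j k| ≤ ∑ k', |A j k'| :=
        Finset.single_le_sum (f := fun k' => |A j k'|) (fun _ _ => abs_nonneg _)
          (Finset.mem_univ k)
  _ = ((∑ k', ‖A j k'‖₊ : NNReal) : ℝ) := by push_cast [Real.nnnorm_abs]; rfl
  _ ≤ _ := by
      exact_mod_cast NNReal.coe_le_coe.mpr
        (Finset.le_sup (f := fun i => ∑ j', ‖A i j'‖₊) (Finset.mem_univ j))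

lemma norm_le_rowSumNorm {m : ℕ} [NeZero m] (A : Matrix (Fin m) (Fin m) ℝ) :
    ‖A‖ ≤ rowSumNorm A := by
  obtain ⟨j, -, hj⟩ := Finset.exists_mem_eq_sup Finset.univ Finset.univ_nonempty
    (fun i => ∑ k, ‖A i k‖₊)
  rw [Matrix.linfty_opNorm_def, hj]
  calc ((∑ k, ‖A j k‖₊ : NNReal) : ℝ) = ∑ k, |A j k| := by push_cast [Real.nnnorm_abs]; rfl
  _ ≤ ⨆ i, ∑ k, |A i k| :=
      le_ciSup (f := fun i => ∑ k, |A i k|) (Set.Finite.bddAbove (Set.finite_range _)) j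

lemma pow_tangent {i : ℕ} (hi : 1 ≤ i) {u b : ℝ} (hu : 0 ≤ u) (hb : 0 ≤ b) :
    (i:ℝ) * b^(i-1) * (u - b) ≤ u^i - b^i := by
  rw [← geom_sum₂_mul u b i]
  have hsum : ∀ k ∈ Finset.range i, (u ≥ b → b^(i-1) ≤ u^k * b^(i-1-k)) ∧
      (u ≤ b → u^k * b^(i-1-k) ≤ b^(i-1)) := by
    intro k hk
    have hk' : k < i := Finset.mem_range.mp hk
    have hsplit : b^(i-1) = b^k * b^(i-1-k) := by rw [← pow_add]; congr 1; omega
    constructor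
    · intro h
      rw [hsplit]
      exact mul_le_mul_of_nonneg_right (pow_le_pow_left₀ hb h k) (pow_nonneg hb _)
    · intro h
      rw [hsplit]
      exact mul_le_mul_of_nonneg_right (pow_le_pow_left₀ hu h k) (pow_nonneg hb _)
  rcases le_total b u with h | h
  · apply mul_le_mul_of_nonneg_right ?_ (by linarith)
    calc (i:ℝ) * b^(i-1) = ∑ _k ∈ Finset.range i, b^(i-1) := by
          rw [Finset.sum_const, Finset.card_range]; ring
    _ ≤ ∑ k ∈ Finset.range i, u^k * b^(i-1-k) :=
        Finset.sum_le_sum fun k hk => (hsum k hk).1 h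
  · have hle : ∑ k ∈ Finset.range i, u^k * b^(i-1-k) ≤ (i:ℝ) * b^(i-1) := by
      calc ∑ k ∈ Finset.range i, u^k * b^(i-1-k) ≤ ∑ _k ∈ Finset.range i, b^(i-1) :=
            Finset.sum_le_sum fun k hk => (hsum k hk).2 h
      _ = (i:ℝ) * b^(i-1) := by rw [Finset.sum_const, Finset.card_range]; ring
    exact mul_le_mul_of_nonpos_right hle (by linarith)

lemma min_claim {i : ℕ} (hi : 2 ≤ i) {u : ℝ} (hu0 : 0 ≤ u) :
    (i:ℝ)^(-(i:ℝ)/((i:ℝ)-1)) - (i:ℝ)^(-(1:ℝ)/((i:ℝ)-1)) ≤ u^i - u := by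
  have hi1 : (1:ℝ) < (i:ℝ) := by exact_mod_cast (by omega : 1 < i)
  have hipos : (0:ℝ) < (i:ℝ) := by linarith
  set b := (i:ℝ)^(-(1:ℝ)/((i:ℝ)-1)) with hbdef
  have hb : 0 < b := Real.rpow_pos_of_pos hipos _
  have hcast : ((i - 1 : ℕ) : ℝ) = (i:ℝ) - 1 := by
    push_cast [Nat.cast_sub (by omega : 1 ≤ i)]; ring
  have hbpow : b ^ (i-1) = (i:ℝ)⁻¹ := by
    rw [hbdef, ← Real.rpow_natCast ((i:ℝ)^(-(1:ℝ)/((i:ℝ)-1))) (i-1),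
      ← Real.rpow_mul hipos.le, hcast,
      show (-(1:ℝ)/((i:ℝ)-1)) * ((i:ℝ)-1) = -1 from div_mul_cancel₀ _ (by linarith : (i:ℝ)-1 ≠ 0),
      Real.rpow_neg_one]
  have hbi : b ^ i = (i:ℝ)^(-(i:ℝ)/((i:ℝ)-1)) := by
    rw [hbdef, ← Real.rpow_natCast ((i:ℝ)^(-(1:ℝ)/((i:ℝ)-1))) i, ← Real.rpow_mul hipos.le]
    congr 1
    rw [div_mul_eq_mul_div]
    ring_nf
  have key := pow_tangent (by omega : 1 ≤ i) hu0 hb.le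
  rw [hbpow, mul_inv_cancel₀ (ne_of_gt hipos), one_mul] at key
  rw [← hbi]
  linarith

lemma tau_mem {i : ℕ} (hi : 2 ≤ i) {t δ : ℝ} (hδ : 0 < δ) (ht0 : 0 ≤ t) (htδ : t ≤ δ) :
    t^i - t*δ^(i-1) ∈ Set.Icc (tauLo i δ) 0 := by
  have hu0 : 0 ≤ t/δ := div_nonneg ht0 hδ.le
  have hrepr : t^i - t*δ^(i-1) = ((t/δ)^i - t/δ) * δ^i := by
    have h1 : (t/δ)^i * δ^i = t^i := by
      rw [div_pow, div_mul_cancel₀]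
      exact pow_ne_zero _ (ne_of_gt hδ)
    have h2 : (t/δ) * δ^i = t * δ^(i-1) := by
      rw [show i = (i-1)+1 by omega, pow_succ, Nat.add_sub_cancel, div_mul_eq_mul_div,
        mul_div_assoc, mul_div_cancel_right₀ _ hδ.ne']
    calc t^i - t*δ^(i-1) = (t/δ)^i * δ^i - (t/δ) * δ^i := by rw [h1, h2]
    _ = _ := by ring
  constructor
  · rw [hrepr, tauLo]
    exact mul_le_mul_of_nonneg_right (min_claim hi hu0) (pow_nonneg hδ.le i)
  · rw [hrepr]
    have hle : (t/δ)^i ≤ t/δ := by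
      have hu1 : t/δ ≤ 1 := div_le_one_of_le₀ htδ hδ.le
      calc (t/δ)^i ≤ (t/δ)^1 := pow_le_pow_of_le_one hu0 hu1 (by omega)
      _ = t/δ := pow_one _
    nlinarith [pow_nonneg hδ.le i]

/-- Time-interval enclosure of the approximate homogeneous solution:
with `x̂(t) = ‖x₀‖ V exp(H t) e₁` and `V e₁ = x₀/‖x₀‖`, for each `t ∈ [0, δ]` one has
`x̂(t) = x₀ + (t/δ)(x̂(δ) − x₀) + ‖x₀‖ V (Σ_{i=2}^η τᵢ Hⁱ/i! + E) e₁` for suitable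
`τᵢ` in the correction intervals and `E` with entries bounded by `Φ`. -/
theorem stmt9 {n ξ : ℕ} [NeZero ξ]
    (x₀ : Fin n → ℝ) (hx₀ : x₀ ≠ 0)
    (V : Matrix (Fin n) (Fin ξ) ℝ) (hV : V *ᵥ e1 = (euclNorm x₀)⁻¹ • x₀)
    (H : Matrix (Fin ξ) (Fin ξ) ℝ) (δ : ℝ) (hδ : 0 < δ)
    (η : ℕ) (hη : 2 ≤ η) (hsmall : rowSumNorm H * δ / ((η : ℝ) + 2) < 1)
    (Φ : ℝ)
    (hΦ : Φ = (rowSumNorm H * δ) ^ (η + 1) / ((Nat.factorial (η + 1) : ℝ))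
        * (1 / (1 - rowSumNorm H * δ / ((η : ℝ) + 2))))
    (xhat : ℝ → Fin n → ℝ)
    (hxhat : ∀ t, xhat t = euclNorm x₀ • (V *ᵥ (mexp (t • H) *ᵥ e1)))
    (t : ℝ) (ht : t ∈ Set.Icc 0 δ) :
    ∃ (τ : ℕ → ℝ) (E : Matrix (Fin ξ) (Fin ξ) ℝ),
      (∀ i ∈ Finset.Icc 2 η, τ i ∈ Set.Icc (tauLo i δ) 0) ∧
      (∀ j k, |E j k| ≤ Φ) ∧
      xhat t = x₀ + (t / δ) • (xhat δ - x₀)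
        + euclNorm x₀ • (V *ᵥ
            ((∑ i ∈ Finset.Icc 2 η, (τ i / (Nat.factorial i : ℝ)) • H ^ i + E) *ᵥ e1)) := by
  obtain ⟨ht0, htδ⟩ := ht
  have hnormH : ‖H‖ ≤ rowSumNorm H := norm_le_rowSumNorm H
  have hrsn0 : 0 ≤ rowSumNorm H := le_trans (norm_nonneg H) hnormH
  set a := rowSumNorm H * δ with ha
  have ha0 : 0 ≤ a := mul_nonneg hrsn0 hδ.le
  set r := a / ((η:ℝ)+2) with hr
  have hr0 : 0 ≤ r := div_nonneg ha0 (by positivity)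
  have hr1 : r < 1 := hsmall
  set c : ℕ → ℝ := fun i => (t^i - (t/δ)*δ^i)/(i.factorial : ℝ) with hc
  set g : ℕ → Matrix (Fin ξ) (Fin ξ) ℝ := fun i => c i • H^i with hgdef
  -- the exponential series
  have hexp : ∀ s : ℝ, HasSum (fun i : ℕ => (s^i / (i.factorial : ℝ)) • H^i) (mexp (s • H)) := by
    intro s
    have h := NormedSpace.exp_series_hasSum_exp' (𝕂 := ℝ) (s • H)
    have hfun : (fun i : ℕ => ((i.factorial : ℝ))⁻¹ • (s • H)^i)
        = fun i : ℕ => (s^i / (i.factorial : ℝ)) • H^i := by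
      funext i
      rw [smul_pow, smul_smul, div_eq_mul_inv, mul_comm]
    rw [← hfun]
    exact h
  have hg : HasSum g (mexp (t•H) - (t/δ) • mexp (δ•H)) := by
    have h := (hexp t).sub ((hexp δ).const_smul (t/δ))
    have hfun : (fun i : ℕ => (t^i / (i.factorial : ℝ)) • H^i
        - (t/δ) • ((δ^i / (i.factorial : ℝ)) • H^i)) = g := by
      funext i
      rw [hgdef, hc, smul_smul, ← sub_smul]
      congr 1
      ring
    rw [← hfun]
    exact h
  have hE : HasSum (fun k => g (k + (η+1)))
      ((mexp (t•H) - (t/δ) • mexp (δ•H)) - ∑ i ∈ Finset.range (η+1), g i) :=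
    (hasSum_nat_add_iff' (η+1)).mpr hg
  set E := (mexp (t•H) - (t/δ) • mexp (δ•H)) - ∑ i ∈ Finset.range (η+1), g i with hEdef
  -- norm bounds on g
  have hnormg : ∀ i : ℕ, 1 ≤ i → ‖g i‖ ≤ a^i / (i.factorial : ℝ) := by
    intro i hi
    have hid : (t/δ)*δ^i = t*δ^(i-1) := by
      rw [show i = (i-1)+1 by omega, pow_succ, Nat.add_sub_cancel, div_mul_eq_mul_div,
        mul_div_assoc, mul_div_cancel_right₀ _ hδ.ne']
    have h3 : t^i ≤ t*δ^(i-1) := by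
      calc t^i = t * t^(i-1) := by rw [← pow_succ']; congr 1; omega
      _ ≤ t * δ^(i-1) :=
          mul_le_mul_of_nonneg_left (pow_le_pow_left₀ ht0 htδ _) ht0
    have h4 : t*δ^(i-1) ≤ δ^i := by
      calc t*δ^(i-1) ≤ δ*δ^(i-1) := mul_le_mul_of_nonneg_right htδ (pow_nonneg hδ.le _)
      _ = δ^i := by rw [← pow_succ']; congr 1; omega
    have hcoef : |c i| ≤ δ^i / (i.factorial : ℝ) := by
      rw [hc]
      simp only
      rw [abs_div, abs_of_pos (by positivity : (0:ℝ) < (i.factorial : ℝ)), hid]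
      gcongr
      have ht0i : (0:ℝ) ≤ t^i := pow_nonneg ht0 i
      have hδ0i : (0:ℝ) ≤ δ^i := pow_nonneg hδ.le i
      rw [abs_le]
      constructor <;> linarith
    have hHpow : ‖H^i‖ ≤ (rowSumNorm H)^i := by
      calc ‖H^i‖ ≤ ‖H‖^i := norm_pow_le' H (by omega)
      _ ≤ (rowSumNorm H)^i := pow_le_pow_left₀ (norm_nonneg H) hnormH i
    calc ‖g i‖ = |c i| * ‖H^i‖ := by
          rw [hgdef]; simp only; rw [norm_smul, Real.norm_eq_abs]
    _ ≤ (δ^i/(i.factorial:ℝ)) * (rowSumNorm H)^i :=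
        mul_le_mul hcoef hHpow (norm_nonneg _) (by positivity)
    _ = a^i/(i.factorial:ℝ) := by rw [ha, mul_pow]; ring
  have hM : Summable (fun k : ℕ => a^(η+1)/(((η+1).factorial:ℝ)) * r^k) :=
    (summable_geometric_of_lt_one hr0 hr1).mul_left _
  have hMle : ∀ k : ℕ, ‖g (k + (η+1))‖ ≤ a^(η+1)/(((η+1).factorial:ℝ)) * r^k := by
    intro k
    have h1 := hnormg (k + (η+1)) (by omega)
    have hden : ((η+1).factorial : ℝ) * ((η:ℝ)+2)^k ≤ ((k+(η+1)).factorial : ℝ) := by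
      have h := fact_mul_pow_le η k
      calc ((η+1).factorial:ℝ) * ((η:ℝ)+2)^k
          = (((η+1).factorial * (η+2)^k : ℕ) : ℝ) := by push_cast; ring
      _ ≤ _ := by exact_mod_cast h
    have h2 : a^(k+(η+1)) / ((k+(η+1)).factorial : ℝ)
        ≤ a^(η+1)/(((η+1).factorial:ℝ)) * r^k := by
      rw [hr, div_pow, div_mul_div_comm, pow_add, mul_comm (a^k)]
      exact div_le_div_of_nonneg_left (by positivity) (by positivity) hden
    exact h1.trans h2
  have hsumnorm : Summable (fun k => ‖g (k + (η+1))‖) :=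
    Summable.of_nonneg_of_le (fun _ => norm_nonneg _) hMle hM
  have hEnorm : ‖E‖ ≤ Φ := by
    have h1 : ‖E‖ ≤ ∑' k, ‖g (k + (η+1))‖ := by
      rw [← hE.tsum_eq]
      exact norm_tsum_le_tsum_norm hsumnorm
    have h2 : ∑' k, ‖g (k + (η+1))‖ ≤ ∑' k : ℕ, a^(η+1)/(((η+1).factorial:ℝ)) * r^k :=
      Summable.tsum_le_tsum hMle hsumnorm hM
    have h3 : ∑' k : ℕ, a^(η+1)/(((η+1).factorial:ℝ)) * r^k = Φ := by
      rw [tsum_mul_left, tsum_geometric_of_lt_one hr0 hr1, hΦ, one_div]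
    linarith
  refine ⟨fun i => t^i - t*δ^(i-1), E, ?_, ?_, ?_⟩
  · intro i hi
    exact tau_mem (Finset.mem_Icc.mp hi).1 hδ ht0 htδ
  · intro j k
    exact (entry_le_norm E j k).trans hEnorm
  · have hS : ∑ i ∈ Finset.Icc 2 η,
        ((fun i => t^i - t*δ^(i-1)) i / (Nat.factorial i : ℝ)) • H ^ i
        = ∑ i ∈ Finset.Icc 2 η, g i := by
      refine Finset.sum_congr rfl fun i hi => ?_
      obtain ⟨hi2, -⟩ := Finset.mem_Icc.mp hi
      rw [hgdef]
      simp only [hc]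
      have hid : (t/δ)*δ^i = t*δ^(i-1) := by
        rw [show i = (i-1)+1 by omega, pow_succ, Nat.add_sub_cancel, div_mul_eq_mul_div,
          mul_div_assoc, mul_div_cancel_right₀ _ hδ.ne']
      rw [hid]
    have hg0 : g 0 = 1 - (t/δ) • (1 : Matrix (Fin ξ) (Fin ξ) ℝ) := by
      rw [hgdef]
      simp only [hc]
      norm_num [sub_smul]
    have hg1 : g 1 = 0 := by
      rw [hgdef]
      simp only [hc]
      norm_num [div_mul_cancel₀, hδ.ne']
    have hsplit : ∑ i ∈ Finset.range (η+1), g i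
        = g 0 + g 1 + ∑ i ∈ Finset.Icc 2 η, g i := by
      rw [Finset.range_eq_Ico,
        ← Finset.sum_Ico_consecutive _ (by omega : 0 ≤ 2) (by omega : 2 ≤ η+1)]
      congr 1
      rw [← Finset.range_eq_Ico, Finset.sum_range_succ, Finset.sum_range_one]
    have hmat : mexp (t•H) = 1 + (t/δ) • (mexp (δ•H) - 1)
        + (∑ i ∈ Finset.Icc 2 η, g i + E) := by
      rw [hEdef, hsplit, hg0, hg1, smul_sub]
      abel
    have hnx : euclNorm x₀ ≠ 0 := by
      have hne : (WithLp.toLp 2 x₀ : EuclideanSpace ℝ (Fin n)) ≠ 0 := by simpa using hx₀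
      simpa [euclNorm] using norm_ne_zero_iff.mpr hne
    have hx0 : euclNorm x₀ • (V *ᵥ e1) = x₀ := by
      rw [hV, smul_smul, mul_inv_cancel₀ hnx, one_smul]
    rw [hxhat, hxhat, hS]
    set N := euclNorm x₀ with hN
    rw [← hx0, hmat]
    simp only [add_mulVec, smul_mulVec, one_mulVec, sub_mulVec,
      mulVec_add, mulVec_smul, mulVec_sub, smul_add, smul_sub]
    module
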